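/- For every u, v ∈ ℂ and every ε > 0 there exists C_ε > 0 such that |(e^{4π|u|²} − 1 + 4π|u|² e^{4π|u|²}) − (e^{4π|v|²} − 1 + 4π|v|² e^{4π|v|²})| ≤ C_ε |u − v| (|u| + e^{4π(1+ε)|u|²} − 1 + |v| + e^{4π(1+ε)|v|²} − 1). -/

import Mathlib

open Real

lemma hasDeriv_g (r : ℝ) : HasDerivAt
    (fun r : ℝ => Real.exp (4 * π * r ^ 2) - 1 + 4 * π * r ^ 2 * Real.exp (4 * π * r ^ 2))
    ((16 * π * r + 32 * π ^ 2 * r ^ 3) * Real.exp (4 * π * r ^ 2)) r := by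
  have h1 : HasDerivAt (fun r : ℝ => 4 * π * r ^ 2) (8 * π * r) r := by
    have := (hasDerivAt_pow 2 r).const_mul (4 * π)
    refine this.congr_deriv ?_
    push_cast
    ring
  have h2 : HasDerivAt (fun r : ℝ => Real.exp (4 * π * r ^ 2))
      (Real.exp (4 * π * r ^ 2) * (8 * π * r)) r := h1.exp
  have h3 := ((h2.sub_const 1).add (h1.mul h2))
  refine h3.congr_deriv ?_
  ring

lemma pointwise_bound (ε : ℝ) (hε : 0 < ε) : ∃ C > (0:ℝ), ∀ r : ℝ, 0 ≤ r →
    (16 * π * r + 32 * π ^ 2 * r ^ 3) * Real.exp (4 * π * r ^ 2) ≤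
      C * (r + (Real.exp (4 * π * (1 + ε) * r ^ 2) - 1)) := by
  have hπ := Real.pi_pos
  set A : ℝ := (16 * π + 32 * π ^ 2) * (Real.exp (4 * π) + (3 / (4 * π * ε)) ^ 3) with hA
  have hApos : 0 < A := by
    apply mul_pos
    · positivity
    · positivity
  refine ⟨A, hApos, fun r hr => ?_⟩
  have hexp1 : (1:ℝ) ≤ Real.exp (4 * π * (1 + ε) * r ^ 2) := by
    rw [show (1:ℝ) = Real.exp 0 by simp]
    apply Real.exp_le_exp.2
    positivity
  rcases le_total r 1 with h1 | h1
  · -- r ≤ 1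
    have hr3 : r ^ 3 ≤ r := by nlinarith
    have he : Real.exp (4 * π * r ^ 2) ≤ Real.exp (4 * π) := by
      apply Real.exp_le_exp.2
      have hr2 : r ^ 2 ≤ 1 := by nlinarith
      nlinarith [mul_nonneg hπ.le (by linarith : (0:ℝ) ≤ 1 - r ^ 2)]
    have : (16 * π * r + 32 * π ^ 2 * r ^ 3) * Real.exp (4 * π * r ^ 2) ≤
        (16 * π + 32 * π ^ 2) * Real.exp (4 * π) * r := by
      have hnn : (0:ℝ) ≤ 16 * π * r + 32 * π ^ 2 * r ^ 3 := by positivity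
      calc (16 * π * r + 32 * π ^ 2 * r ^ 3) * Real.exp (4 * π * r ^ 2)
          ≤ (16 * π * r + 32 * π ^ 2 * r ^ 3) * Real.exp (4 * π) := by
            exact mul_le_mul_of_nonneg_left he hnn
        _ ≤ ((16 * π + 32 * π ^ 2) * r) * Real.exp (4 * π) := by
            have : 16 * π * r + 32 * π ^ 2 * r ^ 3 ≤ (16 * π + 32 * π ^ 2) * r := by nlinarith
            exact mul_le_mul_of_nonneg_right this (Real.exp_pos _).le
        _ = (16 * π + 32 * π ^ 2) * Real.exp (4 * π) * r := by ring
    calc (16 * π * r + 32 * π ^ 2 * r ^ 3) * Real.exp (4 * π * r ^ 2)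
        ≤ (16 * π + 32 * π ^ 2) * Real.exp (4 * π) * r := this
      _ ≤ A * r := by
          apply mul_le_mul_of_nonneg_right _ hr
          rw [hA]
          have : (0:ℝ) < (3 / (4 * π * ε)) ^ 3 := by positivity
          nlinarith [mul_pos (by positivity : (0:ℝ) < 16 * π + 32 * π ^ 2) this]
      _ ≤ A * (r + (Real.exp (4 * π * (1 + ε) * r ^ 2) - 1)) := by
          apply mul_le_mul_of_nonneg_left _ hApos.le
          linarith
  · -- 1 ≤ r
    set y : ℝ := (4 * π * ε / 3) * r ^ 2 with hy
    have hy0 : 0 ≤ y := by positivity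
    have hcube : 1 + y ^ 3 ≤ Real.exp (4 * π * ε * r ^ 2) := by
      have h1y : 1 + y ≤ Real.exp y := by linarith [Real.add_one_le_exp y]
      have : (1 + y) ^ 3 ≤ (Real.exp y) ^ 3 := by
        apply pow_le_pow_left₀ (by linarith) _
        · linarith [Real.add_one_le_exp y]
      have h2 : Real.exp y ^ 3 = Real.exp (4 * π * ε * r ^ 2) := by
        rw [← Real.exp_nat_mul]
        congr 1
        rw [hy]; ring
      nlinarith [this, h2, hy0]
    have hr6 : r ^ 3 ≤ r ^ 6 := by nlinarith [sq_nonneg r, sq_nonneg (r ^ 2), sq_nonneg (r ^ 3 - r), mul_nonneg (mul_nonneg hr hr) hr]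
    have hkey : r ^ 3 ≤ (3 / (4 * π * ε)) ^ 3 * (Real.exp (4 * π * ε * r ^ 2) - 1) := by
      have hy3 : y ^ 3 = (4 * π * ε / 3) ^ 3 * r ^ 6 := by rw [hy]; ring
      have hc : (3 / (4 * π * ε)) ^ 3 * (4 * π * ε / 3) ^ 3 = 1 := by
        field_simp
      calc r ^ 3 ≤ r ^ 6 := hr6
        _ = (3 / (4 * π * ε)) ^ 3 * ((4 * π * ε / 3) ^ 3 * r ^ 6) := by
            rw [← mul_assoc, hc, one_mul]
        _ = (3 / (4 * π * ε)) ^ 3 * y ^ 3 := by rw [hy3]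
        _ ≤ (3 / (4 * π * ε)) ^ 3 * (Real.exp (4 * π * ε * r ^ 2) - 1) := by
            apply mul_le_mul_of_nonneg_left _ (by positivity)
            linarith
    have hsplit : Real.exp (4 * π * r ^ 2) * (Real.exp (4 * π * ε * r ^ 2) - 1) ≤
        Real.exp (4 * π * (1 + ε) * r ^ 2) - 1 := by
      have hmul : Real.exp (4 * π * r ^ 2) * Real.exp (4 * π * ε * r ^ 2) =
          Real.exp (4 * π * (1 + ε) * r ^ 2) := by
        rw [← Real.exp_add]; ring_nf
      have h1e : (1:ℝ) ≤ Real.exp (4 * π * r ^ 2) := by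
        rw [show (1:ℝ) = Real.exp 0 by simp]; exact Real.exp_le_exp.2 (by positivity)
      nlinarith
    have hpoly : 16 * π * r + 32 * π ^ 2 * r ^ 3 ≤ (16 * π + 32 * π ^ 2) * r ^ 3 := by
      have hr3 : r ≤ r ^ 3 := by nlinarith [mul_nonneg hr hr, sq_nonneg (r - 1), sq_nonneg (r + 1)]
      nlinarith [mul_nonneg hπ.le (by linarith : (0:ℝ) ≤ r ^ 3 - r)]
    have hexpnn : 0 ≤ Real.exp (4 * π * ε * r ^ 2) - 1 := by
      have : (1:ℝ) ≤ Real.exp (4 * π * ε * r ^ 2) := by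
        rw [show (1:ℝ) = Real.exp 0 by simp]; exact Real.exp_le_exp.2 (by positivity)
      linarith
    calc (16 * π * r + 32 * π ^ 2 * r ^ 3) * Real.exp (4 * π * r ^ 2)
        ≤ ((16 * π + 32 * π ^ 2) * r ^ 3) * Real.exp (4 * π * r ^ 2) := by
          exact mul_le_mul_of_nonneg_right hpoly (Real.exp_pos _).le
      _ ≤ ((16 * π + 32 * π ^ 2) * ((3 / (4 * π * ε)) ^ 3 *
            (Real.exp (4 * π * ε * r ^ 2) - 1))) * Real.exp (4 * π * r ^ 2) := by
          apply mul_le_mul_of_nonneg_right _ (Real.exp_pos _).le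
          exact mul_le_mul_of_nonneg_left hkey (by positivity)
      _ = (16 * π + 32 * π ^ 2) * (3 / (4 * π * ε)) ^ 3 *
            (Real.exp (4 * π * r ^ 2) * (Real.exp (4 * π * ε * r ^ 2) - 1)) := by ring
      _ ≤ (16 * π + 32 * π ^ 2) * (3 / (4 * π * ε)) ^ 3 *
            (Real.exp (4 * π * (1 + ε) * r ^ 2) - 1) := by
          exact mul_le_mul_of_nonneg_left hsplit (by positivity)
      _ ≤ A * (Real.exp (4 * π * (1 + ε) * r ^ 2) - 1) := by
          apply mul_le_mul_of_nonneg_right _ (by linarith)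
          rw [hA]
          nlinarith [mul_pos (by positivity : (0:ℝ) < 16 * π + 32 * π ^ 2) (Real.exp_pos (4 * π)), (by positivity : (0:ℝ) < (3 / (4 * π * ε)) ^ 3)]
      _ ≤ A * (r + (Real.exp (4 * π * (1 + ε) * r ^ 2) - 1)) := by
          apply mul_le_mul_of_nonneg_left _ hApos.le
          linarith

theorem derivative_difference_estimate :
    ∀ ε > (0:ℝ), ∃ C > (0:ℝ), ∀ u v : ℂ,
      |(Real.exp (4 * π * ‖u‖ ^ 2) - 1 + 4 * π * ‖u‖ ^ 2 * Real.exp (4 * π * ‖u‖ ^ 2)) -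
        (Real.exp (4 * π * ‖v‖ ^ 2) - 1 + 4 * π * ‖v‖ ^ 2 * Real.exp (4 * π * ‖v‖ ^ 2))| ≤
      C * ‖u - v‖ * (‖u‖ + (Real.exp (4 * π * (1 + ε) * ‖u‖ ^ 2) - 1) +
        ‖v‖ + (Real.exp (4 * π * (1 + ε) * ‖v‖ ^ 2) - 1)) := by
  intro ε hε
  obtain ⟨C, hC, hbound⟩ := pointwise_bound ε hε
  refine ⟨C, hC, fun u v => ?_⟩
  set a := ‖u‖ with ha
  set b := ‖v‖ with hb
  have ha0 : 0 ≤ a := norm_nonneg u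
  have hb0 : 0 ≤ b := norm_nonneg v
  set M := max a b with hM
  have hM0 : 0 ≤ M := le_trans ha0 (le_max_left a b)
  set g : ℝ → ℝ := fun r => Real.exp (4 * π * r ^ 2) - 1 + 4 * π * r ^ 2 * Real.exp (4 * π * r ^ 2) with hg
  set D : ℝ := (16 * π * M + 32 * π ^ 2 * M ^ 3) * Real.exp (4 * π * M ^ 2) with hD
  -- derivative bound on Icc 0 M
  have hmono : ∀ x ∈ Set.Icc (0:ℝ) M,
      ‖(16 * π * x + 32 * π ^ 2 * x ^ 3) * Real.exp (4 * π * x ^ 2)‖ ≤ D := by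
    intro x hx
    obtain ⟨hx0, hxM⟩ := hx
    have hπ := Real.pi_pos
    have hnn : (0:ℝ) ≤ (16 * π * x + 32 * π ^ 2 * x ^ 3) * Real.exp (4 * π * x ^ 2) := by positivity
    rw [Real.norm_of_nonneg hnn, hD]
    have hx3 : x ^ 3 ≤ M ^ 3 := pow_le_pow_left₀ hx0 hxM 3
    have hx2 : x ^ 2 ≤ M ^ 2 := pow_le_pow_left₀ hx0 hxM 2
    have h1 : 16 * π * x + 32 * π ^ 2 * x ^ 3 ≤ 16 * π * M + 32 * π ^ 2 * M ^ 3 := by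
      have := mul_nonneg hπ.le hπ.le
      nlinarith [mul_nonneg hπ.le (by linarith : (0:ℝ) ≤ M - x), mul_nonneg (mul_nonneg hπ.le hπ.le) (by linarith : (0:ℝ) ≤ M ^ 3 - x ^ 3)]
    have h2 : Real.exp (4 * π * x ^ 2) ≤ Real.exp (4 * π * M ^ 2) := by
      apply Real.exp_le_exp.2
      nlinarith [mul_nonneg hπ.le (by linarith : (0:ℝ) ≤ M ^ 2 - x ^ 2)]
    have h3 : (0:ℝ) ≤ 16 * π * x + 32 * π ^ 2 * x ^ 3 := by positivity
    exact mul_le_mul h1 h2 (Real.exp_pos _).le (by positivity)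
  have hmvt : ‖g a - g b‖ ≤ D * ‖a - b‖ := by
    have hconv : Convex ℝ (Set.Icc (0:ℝ) M) := convex_Icc _ _
    have hderiv : ∀ x ∈ Set.Icc (0:ℝ) M, HasDerivWithinAt g
        ((16 * π * x + 32 * π ^ 2 * x ^ 3) * Real.exp (4 * π * x ^ 2)) (Set.Icc (0:ℝ) M) x :=
      fun x _ => (hasDeriv_g x).hasDerivWithinAt
    have haI : a ∈ Set.Icc (0:ℝ) M := ⟨ha0, le_max_left a b⟩
    have hbI : b ∈ Set.Icc (0:ℝ) M := ⟨hb0, le_max_right a b⟩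
    exact hconv.norm_image_sub_le_of_norm_hasDerivWithin_le hderiv hmono hbI haI
  have hab : ‖a - b‖ ≤ ‖u - v‖ := by
    rw [Real.norm_eq_abs]
    exact abs_norm_sub_norm_le u v
  -- D ≤ C * S
  set S : ℝ := a + (Real.exp (4 * π * (1 + ε) * a ^ 2) - 1) + b + (Real.exp (4 * π * (1 + ε) * b ^ 2) - 1) with hS
  have hterm : ∀ r : ℝ, 0 ≤ r → (0:ℝ) ≤ Real.exp (4 * π * (1 + ε) * r ^ 2) - 1 := by
    intro r hr
    have : (1:ℝ) ≤ Real.exp (4 * π * (1 + ε) * r ^ 2) := by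
      rw [show (1:ℝ) = Real.exp 0 by simp]
      exact Real.exp_le_exp.2 (by positivity)
    linarith
  have hDS : D ≤ C * S := by
    have h1 := hbound M hM0
    rw [← hD] at h1
    refine h1.trans ?_
    apply mul_le_mul_of_nonneg_left _ hC.le
    have hua := hterm a ha0
    have hvb := hterm b hb0
    rcases max_cases a b with ⟨hMe, _⟩ | ⟨hMe, _⟩ <;> rw [hM, hMe, hS] <;> linarith
  have hS0 : 0 ≤ S := by
    have hua := hterm a ha0
    have hvb := hterm b hb0
    rw [hS]; linarith
  have habs : |g a - g b| ≤ D * ‖u - v‖ := by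
    rw [← Real.norm_eq_abs]
    calc ‖g a - g b‖ ≤ D * ‖a - b‖ := hmvt
      _ ≤ D * ‖u - v‖ := by
          apply mul_le_mul_of_nonneg_left hab
          rw [hD]
          have hπ := Real.pi_pos
          positivity
  calc |g a - g b| ≤ D * ‖u - v‖ := habs
    _ ≤ (C * S) * ‖u - v‖ := mul_le_mul_of_nonneg_right hDS (norm_nonneg _)
    _ = C * ‖u - v‖ * S := by ring
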